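/- Let w be a cyclically reduced word of length m over Σ_k, and let Γ̃_w be its directed labeled cycle graph. Suppose a component C of the pair-graph Υ corresponds to a non-coherent maximal repetition of a subword u, with v_x the end of one appearance of u and v_y the beginning of the other, and write w_x (the cyclic shift of w starting after v_x) as a_0 b_0 where a_0 runs from v_x to v_y. Then the first letter of b_0 equals the inverse of its last letter, and in particular the first letter of b_0 differs from the first letter of a_0. -/

import Mathlib

/-- A letter `g_i^{±1}` of the alphabet `Σ_k`. -/
abbrev Letter (k : ℕ) := Fin k × Bool

/-- The inverse letter: `(g_i^{α})⁻¹ = g_i^{-α}`. -/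
def Letter.inv {k : ℕ} (x : Letter k) : Letter k := (x.1, !x.2)

/-- `w` is cyclically reduced: no two cyclically consecutive letters are mutually inverse. -/
def CyclicallyReduced {k : ℕ} (w : List (Letter k)) : Prop :=
  ∀ i : Fin w.length,
    w.get ⟨((i : ℕ) + 1) % w.length, Nat.mod_lt _ i.pos⟩ ≠ Letter.inv (w.get i)

/-- Suppose the cyclically reduced word `wx` (a cyclic shift of `w` starting right
after `v_x`) factors as `wx = a₀ ++ b₀` with `a₀` nonempty, where `b₀` begins with one
appearance of a non-coherent repetition and ends with the other:
`b₀ = u ++ r ++ u⁻¹` with `u` nonempty. Then the first letter of `b₀` equals the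
inverse of its last letter, and in particular the first letter of `b₀` differs from
the first letter of `a₀`. -/
theorem stmt18 {k : ℕ} (wx a0 b0 u r : List (Letter k))
    (hcyc : CyclicallyReduced wx) (hwx : wx = a0 ++ b0)
    (ha0 : a0 ≠ []) (hu : u ≠ [])
    (hb0 : b0 = u ++ r ++ (u.reverse.map Letter.inv)) :
    (∀ x ∈ b0.head?, ∀ y ∈ b0.getLast?, x = Letter.inv y) ∧
    (∀ x ∈ b0.head?, ∀ y ∈ a0.head?, x ≠ y) := by
  obtain ⟨c, u', rfl⟩ := List.exists_cons_of_ne_nil hu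
  obtain ⟨a, a', rfl⟩ := List.exists_cons_of_ne_nil ha0
  have hhead : b0.head? = some c := by simp [hb0]
  have hlast : b0.getLast? = some (Letter.inv c) := by
    rw [hb0]
    rw [List.getLast?_append_of_ne_nil _ (by simp)]
    rw [List.map_reverse, List.getLast?_reverse]
    simp
  have hb0ne : b0 ≠ [] := by simp [hb0]
  subst hwx
  have hinv : ∀ z : Letter k, Letter.inv (Letter.inv z) = z := by
    intro z; simp [Letter.inv]
  constructor
  · intro x hx y hy
    rw [hhead] at hx; rw [hlast] at hy
    simp only [Option.mem_def, Option.some.injEq] at hx hy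
    subst hx; subst hy
    rw [hinv]
  · intro x hx y hy
    rw [hhead] at hx
    simp only [Option.mem_def, Option.some.injEq, List.head?_cons] at hx hy
    subst hx; subst hy
    -- use cyclic reducedness at the last position
    set l : List (Letter k) := a :: a' ++ b0 with hl
    have hlen : 0 < l.length := by simp [hl]
    have h := hcyc ⟨l.length - 1, Nat.sub_lt hlen Nat.one_pos⟩
    have hmod : (l.length - 1 + 1) % l.length = 0 := by
      rw [Nat.sub_add_cancel hlen, Nat.mod_self]
    have hget0 : l.get ⟨(l.length - 1 + 1) % l.length, Nat.mod_lt _ hlen⟩ = a := by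
      simp only [hmod]
      rfl
    have hgetlast : l.get ⟨l.length - 1, Nat.sub_lt hlen Nat.one_pos⟩ = Letter.inv c := by
      have hne : l ≠ [] := by simp [hl]
      have h1 : l.getLast hne = l.get ⟨l.length - 1, Nat.sub_lt hlen Nat.one_pos⟩ :=
        List.getLast_eq_getElem _
      rw [← h1]
      have h2 := List.getLast?_eq_getLast hne
      have hwl : l.getLast? = some (Letter.inv c) := by
        rw [hl, List.getLast?_append_of_ne_nil _ hb0ne, hlast]
      rw [hwl] at h2
      exact (Option.some.injEq _ _).mp h2.symm
    rw [hget0, hgetlast, hinv] at h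
    intro hxy
    exact h hxy.symm
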